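/- Let X₁, X₂ be independent random variables each with the logistic distribution (density f(x) = e^{-x}/(1+e^{-x})²). Then ∫_{0}^{∞} x · P(X₁ + X₂ > x) dx = π²/6. -/

import Mathlib

open MeasureTheory ProbabilityTheory Real Set Filter
open scoped Topology ENNReal

noncomputable section ZetaTwoAssignmentAux

namespace ZetaTwoAux

/-- The logistic density. -/
def pdf (x : ℝ) : ℝ := Real.exp (-x) / (1 + Real.exp (-x)) ^ 2

lemma pdf_pos (x : ℝ) : 0 < pdf x := by
  have h1 : (0:ℝ) < Real.exp (-x) := Real.exp_pos _
  have h2 : (0:ℝ) < 1 + Real.exp (-x) := by positivity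
  exact div_pos h1 (by positivity)

lemma pdf_nonneg (x : ℝ) : 0 ≤ pdf x := (pdf_pos x).le

lemma continuous_pdf : Continuous pdf := by
  apply Continuous.div (by continuity) (by continuity)
  intro x
  have : (0:ℝ) < 1 + Real.exp (-x) := by positivity
  positivity

lemma measurable_pdf : Measurable pdf := continuous_pdf.measurable

lemma antideriv_pdf (x : ℝ) :
    HasDerivAt (fun a : ℝ => (1 + Real.exp (-a))⁻¹) (pdf x) x := by
  have h1 : HasDerivAt (fun a : ℝ => 1 + Real.exp (-a)) (Real.exp (-x) * (-1)) x := by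
    exact ((hasDerivAt_neg x).exp).const_add 1
  have h2 := h1.inv (by positivity)
  refine h2.congr_deriv ?_
  rw [pdf]
  field_simp

lemma antideriv_tendsto_atTop :
    Tendsto (fun a : ℝ => (1 + Real.exp (-a))⁻¹) atTop (𝓝 1) := by
  have h : Tendsto (fun a : ℝ => 1 + Real.exp (-a)) atTop (𝓝 (1 + 0)) := by
    exact (Real.tendsto_exp_comp_nhds_zero.mpr tendsto_neg_atTop_atBot).const_add 1
  simpa using h.inv₀ (by norm_num)

lemma pdf_integrableOn_Ioi (t : ℝ) : IntegrableOn pdf (Ioi t) := by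
  refine integrableOn_Ioi_deriv_of_nonneg' (fun x _ => antideriv_pdf x)
    (fun x _ => pdf_nonneg x) antideriv_tendsto_atTop

lemma pdf_le_exp (x : ℝ) : pdf x ≤ Real.exp x := by
  rw [pdf]
  have h1 : (0:ℝ) < Real.exp (-x) := Real.exp_pos _
  have h2 : (0:ℝ) < 1 + Real.exp (-x) := by positivity
  rw [div_le_iff₀ (by positivity)]
  have : Real.exp (-x) * Real.exp x = 1 := by
    rw [← Real.exp_add]; simp
  nlinarith [sq_nonneg (Real.exp (-x)), Real.exp_pos x]

lemma pdf_integrable : Integrable pdf := by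
  have h1 : IntegrableOn pdf (Iic 0) := by
    refine Integrable.mono (integrableOn_exp_Iic 0) continuous_pdf.aestronglyMeasurable.restrict ?_
    refine Eventually.of_forall fun x => ?_
    rw [Real.norm_eq_abs, Real.norm_eq_abs, abs_of_nonneg (pdf_nonneg x),
      abs_of_nonneg (Real.exp_pos x).le]
    exact pdf_le_exp x
  have h2 : IntegrableOn pdf (Ioi 0) := pdf_integrableOn_Ioi 0
  have := h1.union h2
  rwa [Iic_union_Ioi, integrableOn_univ] at this

/-- Tail of the logistic distribution. -/
lemma pdf_tail (t : ℝ) : ∫ a in Ioi t, pdf a = (1 + Real.exp t)⁻¹ := by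
  rw [integral_Ioi_of_hasDerivAt_of_tendsto' (fun x _ => antideriv_pdf x)
    (pdf_integrableOn_Ioi t) antideriv_tendsto_atTop]
  have h2 : (0:ℝ) < 1 + Real.exp (-t) := by positivity
  have h3 : (0:ℝ) < 1 + Real.exp t := by positivity
  have : Real.exp (-t) * Real.exp t = 1 := by rw [← Real.exp_add]; simp
  field_simp
  nlinarith [this]

lemma measure_Ioi (t : ℝ) :
    (volume.withDensity fun x => ENNReal.ofReal (pdf x)) (Ioi t)
      = ENNReal.ofReal (1 + Real.exp t)⁻¹ := by
  rw [withDensity_apply _ measurableSet_Ioi,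
    ← ofReal_integral_eq_lintegral_ofReal (pdf_integrableOn_Ioi t)
      (Eventually.of_forall fun x => pdf_nonneg x), pdf_tail]

/-- The tail of the convolution square of the logistic distribution. -/
def cT (s : ℝ) : ℝ := (s * Real.exp s - Real.exp s + 1) / (Real.exp s - 1) ^ 2

/-- The integrand whose integral over `ℝ` is `cT s`. -/
def g (s a : ℝ) : ℝ := pdf a * (1 + Real.exp (s - a))⁻¹

/-- Antiderivative of `g s`. -/
def H (s a : ℝ) : ℝ :=
  Real.exp s / (Real.exp s - 1) ^ 2
      * Real.log ((1 + Real.exp a) / (Real.exp a + Real.exp s))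
    + (Real.exp s - 1)⁻¹ * (1 + Real.exp a)⁻¹

lemma H_hasDeriv {s : ℝ} (hs : 0 < s) (a : ℝ) : HasDerivAt (H s) (g s a) a := by
  have hc : 1 < Real.exp s := Real.one_lt_exp_iff.mpr hs
  have hca : 0 < Real.exp a + Real.exp s := by positivity
  have h1a : 0 < 1 + Real.exp a := by positivity
  have hr : HasDerivAt (fun a : ℝ => (1 + Real.exp a) / (Real.exp a + Real.exp s))
      ((Real.exp a * (Real.exp a + Real.exp s) - (1 + Real.exp a) * Real.exp a)
        / (Real.exp a + Real.exp s) ^ 2) a :=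
    ((Real.hasDerivAt_exp a).const_add 1).div ((Real.hasDerivAt_exp a).add_const _)
      (ne_of_gt hca)
  have hlog := hr.log (by positivity)
  have hinv := ((Real.hasDerivAt_exp a).const_add 1).inv (ne_of_gt h1a)
  have hsum := (hlog.const_mul (Real.exp s / (Real.exp s - 1) ^ 2)).add
    (hinv.const_mul (Real.exp s - 1)⁻¹)
  refine hsum.congr_deriv ?_
  rw [g, pdf, Real.exp_sub, Real.exp_neg]
  have he : Real.exp a ≠ 0 := (Real.exp_pos a).ne'
  have hc1 : Real.exp s - 1 ≠ 0 := by nlinarith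
  field_simp
  ring

lemma H_tendsto_atTop (s : ℝ) : Tendsto (H s) atTop (𝓝 0) := by
  have h0 : Tendsto (fun a : ℝ => Real.exp (-a)) atTop (𝓝 0) :=
    Real.tendsto_exp_comp_nhds_zero.mpr tendsto_neg_atTop_atBot
  have h1 : Tendsto (fun a : ℝ => (Real.exp (-a) + 1) / (1 + Real.exp s * Real.exp (-a)))
      atTop (𝓝 ((0 + 1) / (1 + Real.exp s * 0))) := by
    refine Tendsto.div (h0.add_const 1) ?_ (by norm_num)
    exact ((h0.const_mul _).const_add 1)
  have heq : ∀ a : ℝ, (1 + Real.exp a) / (Real.exp a + Real.exp s)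
      = (Real.exp (-a) + 1) / (1 + Real.exp s * Real.exp (-a)) := by
    intro a
    rw [Real.exp_neg]
    have he : Real.exp a ≠ 0 := (Real.exp_pos a).ne'
    have h2 : 0 < 1 + Real.exp s * (Real.exp a)⁻¹ := by positivity
    field_simp
  have h1' : Tendsto (fun a : ℝ => (1 + Real.exp a) / (Real.exp a + Real.exp s))
      atTop (𝓝 1) := by
    simp only [heq]
    simpa using h1
  have hlog : Tendsto (fun a : ℝ => Real.log ((1 + Real.exp a) / (Real.exp a + Real.exp s)))
      atTop (𝓝 0) := by
    have := (Real.continuousAt_log one_ne_zero).tendsto.comp h1'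
    simpa [Function.comp_def] using this
  have hinv : Tendsto (fun a : ℝ => (1 + Real.exp a)⁻¹) atTop (𝓝 0) := by
    refine Tendsto.inv_tendsto_atTop ?_
    exact tendsto_atTop_add_const_left _ 1 Real.tendsto_exp_atTop
  have := (hlog.const_mul (Real.exp s / (Real.exp s - 1) ^ 2)).add
    (hinv.const_mul (Real.exp s - 1)⁻¹)
  unfold H
  simpa using this

lemma H_tendsto_atBot (s : ℝ) : Tendsto (H s) atBot
    (𝓝 (Real.exp s / (Real.exp s - 1) ^ 2 * (-s) + (Real.exp s - 1)⁻¹)) := by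
  have h0 : Tendsto (fun a : ℝ => Real.exp a) atBot (𝓝 0) := Real.tendsto_exp_atBot
  have h1 : Tendsto (fun a : ℝ => (1 + Real.exp a) / (Real.exp a + Real.exp s))
      atBot (𝓝 ((1 + 0) / (0 + Real.exp s))) :=
    Tendsto.div (h0.const_add 1) (h0.add_const _) (by positivity)
  have h1' : Tendsto (fun a : ℝ => (1 + Real.exp a) / (Real.exp a + Real.exp s))
      atBot (𝓝 (Real.exp s)⁻¹) := by
    simpa [one_div] using h1
  have hlog : Tendsto (fun a : ℝ => Real.log ((1 + Real.exp a) / (Real.exp a + Real.exp s)))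
      atBot (𝓝 (-s)) := by
    have hne : (Real.exp s)⁻¹ ≠ 0 := by positivity
    have := (Real.continuousAt_log hne).tendsto.comp h1'
    simpa [Real.log_inv, Real.log_exp, Function.comp_def] using this
  have hinv : Tendsto (fun a : ℝ => (1 + Real.exp a)⁻¹) atBot (𝓝 1) := by
    have : Tendsto (fun a : ℝ => 1 + Real.exp a) atBot (𝓝 (1 + 0)) := h0.const_add 1
    have := this.inv₀ (by norm_num)
    simpa using this
  have := (hlog.const_mul (Real.exp s / (Real.exp s - 1) ^ 2)).add
    (hinv.const_mul (Real.exp s - 1)⁻¹)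
  unfold H
  simpa using this

end ZetaTwoAux

namespace ZetaTwoAux

lemma continuous_g (s : ℝ) : Continuous (g s) := by
  refine continuous_pdf.mul (Continuous.inv₀ ?_ ?_)
  · exact continuous_const.add (Real.continuous_exp.comp (continuous_const.sub continuous_id))
  · intro x
    have : (0:ℝ) < Real.exp (s - x) := Real.exp_pos _
    positivity

lemma g_nonneg (s a : ℝ) : 0 ≤ g s a := by
  have : (0:ℝ) < 1 + Real.exp (s - a) := by positivity
  exact mul_nonneg (pdf_nonneg a) (by positivity)

lemma g_le_pdf (s a : ℝ) : g s a ≤ pdf a := by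
  have h : (0:ℝ) < 1 + Real.exp (s - a) := by positivity
  have h2 : (1 + Real.exp (s - a))⁻¹ ≤ 1 := by
    rw [inv_le_one_iff₀]
    right
    nlinarith [Real.exp_pos (s - a)]
  calc g s a ≤ pdf a * 1 := mul_le_mul_of_nonneg_left h2 (pdf_nonneg a)
    _ = pdf a := mul_one _

lemma g_integrable (s : ℝ) : Integrable (g s) := by
  refine pdf_integrable.mono (continuous_g s).aestronglyMeasurable ?_
  refine Eventually.of_forall fun a => ?_
  rw [Real.norm_eq_abs, Real.norm_eq_abs, abs_of_nonneg (g_nonneg s a),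
    abs_of_nonneg (pdf_nonneg a)]
  exact g_le_pdf s a

lemma conv_tail {s : ℝ} (hs : 0 < s) : ∫ a, g s a = cT s := by
  have hc : 1 < Real.exp s := Real.one_lt_exp_iff.mpr hs
  have hc1 : Real.exp s - 1 ≠ 0 := by nlinarith
  have hint := g_integrable s
  rw [← intervalIntegral.integral_Iic_add_Ioi (b := 0) hint.integrableOn hint.integrableOn,
    integral_Iic_of_hasDerivAt_of_tendsto' (fun x _ => H_hasDeriv hs x)
      hint.integrableOn (H_tendsto_atBot s),
    integral_Ioi_of_hasDerivAt_of_tendsto' (fun x _ => H_hasDeriv hs x)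
      hint.integrableOn (H_tendsto_atTop s)]
  rw [cT]
  field_simp
  ring

end ZetaTwoAux

namespace ZetaTwoAux

lemma cT_nonneg {s : ℝ} (hs : 0 ≤ s) : 0 ≤ cT s := by
  rw [cT]
  have h := Real.add_one_le_exp (-s)
  have h2 : Real.exp (-s) * Real.exp s = 1 := by rw [← Real.exp_add]; simp
  have h3 := mul_le_mul_of_nonneg_right h (Real.exp_pos s).le
  refine div_nonneg ?_ (sq_nonneg _)
  nlinarith

lemma lintegral_g {s : ℝ} (hs : 0 < s) :
    (∫⁻ a : ℝ, ENNReal.ofReal (pdf a) * ENNReal.ofReal (1 + Real.exp (s - a))⁻¹)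
      = ENNReal.ofReal (cT s) := by
  have h : ∀ a : ℝ, ENNReal.ofReal (pdf a) * ENNReal.ofReal (1 + Real.exp (s - a))⁻¹
      = ENNReal.ofReal (g s a) := fun a => (ENNReal.ofReal_mul (pdf_nonneg a)).symm
  simp_rw [h]
  rw [← ofReal_integral_eq_lintegral_ofReal (g_integrable s)
    (Eventually.of_forall (g_nonneg s)), conv_tail hs]

lemma prob_tail {Ω : Type*} [MeasureSpace Ω] [IsProbabilityMeasure (ℙ : Measure Ω)]
    (X₁ X₂ : Ω → ℝ) (hmeas₁ : Measurable X₁) (hmeas₂ : Measurable X₂)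
    (hindep : IndepFun X₁ X₂ ℙ)
    (hlaw₁ : Measure.map X₁ ℙ = volume.withDensity fun x => ENNReal.ofReal (pdf x))
    (hlaw₂ : Measure.map X₂ ℙ = volume.withDensity fun x => ENNReal.ofReal (pdf x))
    {s : ℝ} (hs : 0 < s) :
    ℙ {ω | s < X₁ ω + X₂ ω} = ENNReal.ofReal (cT s) := by
  set μ : Measure ℝ := volume.withDensity fun x => ENNReal.ofReal (pdf x) with hμ
  haveI : IsProbabilityMeasure μ := hlaw₁ ▸ Measure.isProbabilityMeasure_map hmeas₁.aemeasurable
  have hmap : Measure.map (fun ω => (X₁ ω, X₂ ω)) ℙ = μ.prod μ := by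
    rw [(ProbabilityTheory.indepFun_iff_map_prod_eq_prod_map_map hmeas₁.aemeasurable
      hmeas₂.aemeasurable).mp hindep, hlaw₁, hlaw₂]
  have hsetm : MeasurableSet {p : ℝ × ℝ | s < p.1 + p.2} :=
    measurableSet_lt measurable_const (measurable_fst.add measurable_snd)
  have hpre : {ω | s < X₁ ω + X₂ ω} = (fun ω => (X₁ ω, X₂ ω)) ⁻¹' {p | s < p.1 + p.2} := rfl
  rw [hpre, ← Measure.map_apply (hmeas₁.prodMk hmeas₂) hsetm, hmap,
    Measure.prod_apply hsetm]
  have hfiber : ∀ a : ℝ, (Prod.mk a ⁻¹' {p : ℝ × ℝ | s < p.1 + p.2}) = Ioi (s - a) := by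
    intro a; ext b; simp [sub_lt_iff_lt_add']
  simp only [hfiber, hμ, measure_Ioi]
  rw [lintegral_withDensity_eq_lintegral_mul _ measurable_pdf.ennreal_ofReal
    (by fun_prop : Measurable fun a : ℝ => ENNReal.ofReal (1 + Real.exp (s - a))⁻¹)]
  simp only [Pi.mul_apply]
  exact lintegral_g hs

lemma hasDerivAt_P {b : ℝ} (hb : 0 < b) (x : ℝ) :
    HasDerivAt (fun s : ℝ => -((s / b + 1 / b ^ 2) * Real.exp (-(b * s))))
      (x * Real.exp (-(b * x))) x := by
  have h1 : HasDerivAt (fun s : ℝ => s / b + 1 / b ^ 2) (1 / b) x :=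
    ((hasDerivAt_id x).div_const b).add_const _
  have h2 : HasDerivAt (fun s : ℝ => Real.exp (-(b * s))) (Real.exp (-(b * x)) * (-b)) x := by
    have : HasDerivAt (fun s : ℝ => -(b * s)) (-(b * 1)) x :=
      ((hasDerivAt_id x).const_mul b).neg
    simpa using this.exp
  have := (h1.mul h2).neg
  refine this.congr_deriv ?_
  have hb' : b ≠ 0 := ne_of_gt hb
  field_simp
  ring

lemma hasDerivAt_Q {b : ℝ} (hb : 0 < b) (x : ℝ) :
    HasDerivAt (fun s : ℝ => -((s ^ 2 / b + 2 * s / b ^ 2 + 2 / b ^ 3) * Real.exp (-(b * s))))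
      (x ^ 2 * Real.exp (-(b * x))) x := by
  have h1 : HasDerivAt (fun s : ℝ => s ^ 2 / b + 2 * s / b ^ 2 + 2 / b ^ 3)
      (2 * x / b + 2 / b ^ 2) x := by
    have hx2 : HasDerivAt (fun s : ℝ => s ^ 2) (2 * x) x := by
      simpa using hasDerivAt_pow 2 x
    have := ((hx2.div_const b).add
      (((hasDerivAt_id x).const_mul 2).div_const (b ^ 2))).add_const (2 / b ^ 3)
    simpa using this
  have h2 : HasDerivAt (fun s : ℝ => Real.exp (-(b * s))) (Real.exp (-(b * x)) * (-b)) x := by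
    have : HasDerivAt (fun s : ℝ => -(b * s)) (-(b * 1)) x :=
      ((hasDerivAt_id x).const_mul b).neg
    simpa using this.exp
  have := (h1.mul h2).neg
  refine this.congr_deriv ?_
  have hb' : b ≠ 0 := ne_of_gt hb
  field_simp
  ring

lemma tendsto_mul_exp {b : ℝ} (hb : 0 < b) :
    Tendsto (fun s : ℝ => s * Real.exp (-(b * s))) atTop (𝓝 0) := by
  have := tendsto_rpow_mul_exp_neg_mul_atTop_nhds_zero 1 b hb
  simpa [Real.rpow_one, neg_mul] using this

lemma tendsto_sq_mul_exp {b : ℝ} (hb : 0 < b) :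
    Tendsto (fun s : ℝ => s ^ 2 * Real.exp (-(b * s))) atTop (𝓝 0) := by
  have := tendsto_rpow_mul_exp_neg_mul_atTop_nhds_zero 2 b hb
  have h2 : ∀ s : ℝ, 0 < s → s ^ (2:ℝ) * Real.exp (-b * s) = s ^ 2 * Real.exp (-(b * s)) := by
    intro s hs
    rw [Real.rpow_two, neg_mul]
  refine this.congr' ?_
  filter_upwards [eventually_gt_atTop 0] with s hs
  exact h2 s hs

lemma tendsto_exp_zero {b : ℝ} (hb : 0 < b) :
    Tendsto (fun s : ℝ => Real.exp (-(b * s))) atTop (𝓝 0) := by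
  apply Real.tendsto_exp_comp_nhds_zero.mpr
  have : Tendsto (fun s : ℝ => b * s) atTop atTop :=
    Tendsto.const_mul_atTop hb tendsto_id
  exact tendsto_neg_atTop_atBot.comp this

lemma tendsto_P {b : ℝ} (hb : 0 < b) :
    Tendsto (fun s : ℝ => -((s / b + 1 / b ^ 2) * Real.exp (-(b * s)))) atTop (𝓝 0) := by
  have h : ∀ s : ℝ, -((s / b + 1 / b ^ 2) * Real.exp (-(b * s)))
      = -((1 / b) * (s * Real.exp (-(b * s))) + (1 / b ^ 2) * Real.exp (-(b * s))) := by
    intro s; ring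
  simp only [h]
  have := (((tendsto_mul_exp hb).const_mul (1 / b)).add
    ((tendsto_exp_zero hb).const_mul (1 / b ^ 2))).neg
  simpa using this

lemma tendsto_Q {b : ℝ} (hb : 0 < b) :
    Tendsto (fun s : ℝ => -((s ^ 2 / b + 2 * s / b ^ 2 + 2 / b ^ 3) * Real.exp (-(b * s))))
      atTop (𝓝 0) := by
  have h : ∀ s : ℝ, -((s ^ 2 / b + 2 * s / b ^ 2 + 2 / b ^ 3) * Real.exp (-(b * s)))
      = -((1 / b) * (s ^ 2 * Real.exp (-(b * s))) + (2 / b ^ 2) * (s * Real.exp (-(b * s)))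
        + (2 / b ^ 3) * Real.exp (-(b * s))) := by
    intro s; ring
  simp only [h]
  have := ((((tendsto_sq_mul_exp hb).const_mul (1 / b)).add
    ((tendsto_mul_exp hb).const_mul (2 / b ^ 2))).add
    ((tendsto_exp_zero hb).const_mul (2 / b ^ 3))).neg
  simpa using this

lemma integral_mul_exp {b : ℝ} (hb : 0 < b) :
    ∫ s in Ioi (0:ℝ), s * Real.exp (-(b * s)) = 1 / b ^ 2 := by
  rw [integral_Ioi_of_hasDerivAt_of_nonneg' (fun x _ => hasDerivAt_P hb x)
    (fun x hx => mul_nonneg (le_of_lt hx) (Real.exp_pos _).le) (tendsto_P hb)]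
  have hb' : b ≠ 0 := ne_of_gt hb
  simp

lemma integrableOn_mul_exp {b : ℝ} (hb : 0 < b) :
    IntegrableOn (fun s : ℝ => s * Real.exp (-(b * s))) (Ioi 0) :=
  integrableOn_Ioi_deriv_of_nonneg' (fun x _ => hasDerivAt_P hb x)
    (fun x hx => mul_nonneg (le_of_lt hx) (Real.exp_pos _).le) (tendsto_P hb)

lemma integral_sq_mul_exp {b : ℝ} (hb : 0 < b) :
    ∫ s in Ioi (0:ℝ), s ^ 2 * Real.exp (-(b * s)) = 2 / b ^ 3 := by
  rw [integral_Ioi_of_hasDerivAt_of_nonneg' (fun x _ => hasDerivAt_Q hb x)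
    (fun x hx => mul_nonneg (sq_nonneg _) (Real.exp_pos _).le) (tendsto_Q hb)]
  have hb' : b ≠ 0 := ne_of_gt hb
  simp

lemma integrableOn_sq_mul_exp {b : ℝ} (hb : 0 < b) :
    IntegrableOn (fun s : ℝ => s ^ 2 * Real.exp (-(b * s))) (Ioi 0) :=
  integrableOn_Ioi_deriv_of_nonneg' (fun x _ => hasDerivAt_Q hb x)
    (fun x hx => mul_nonneg (sq_nonneg _) (Real.exp_pos _).le) (tendsto_Q hb)

lemma lint_mul_exp {b : ℝ} (hb : 0 < b) :
    ∫⁻ s in Ioi (0:ℝ), ENNReal.ofReal (s * Real.exp (-(b * s))) = ENNReal.ofReal (1 / b ^ 2) := by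
  rw [← ofReal_integral_eq_lintegral_ofReal (integrableOn_mul_exp hb) ?_, integral_mul_exp hb]
  exact (ae_restrict_iff' measurableSet_Ioi).2 (ae_of_all _ fun x hx =>
    mul_nonneg (le_of_lt hx) (Real.exp_pos _).le)

lemma lint_sq_mul_exp {b : ℝ} (hb : 0 < b) :
    ∫⁻ s in Ioi (0:ℝ), ENNReal.ofReal (s ^ 2 * Real.exp (-(b * s)))
      = ENNReal.ofReal (2 / b ^ 3) := by
  rw [← ofReal_integral_eq_lintegral_ofReal (integrableOn_sq_mul_exp hb) ?_,
    integral_sq_mul_exp hb]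
  exact (ae_restrict_iff' measurableSet_Ioi).2 (ae_of_all _ fun x hx =>
    mul_nonneg (sq_nonneg _) (Real.exp_pos _).le)

lemma hasSum_G {s : ℝ} (hs : 0 < s) :
    HasSum (fun n : ℕ => (n : ℝ) * (s ^ 2 * Real.exp (-(n * s))))
      (s ^ 2 * (Real.exp s / (Real.exp s - 1) ^ 2)) := by
  have hr : ‖Real.exp (-s)‖ < 1 := by
    rw [Real.norm_eq_abs, abs_of_nonneg (Real.exp_pos _).le]
    exact Real.exp_lt_one_iff.mpr (neg_lt_zero.mpr hs)
  have h := (hasSum_coe_mul_geometric_of_norm_lt_one hr).mul_left (s ^ 2)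
  have hterm : ∀ n : ℕ, s ^ 2 * ((n : ℝ) * Real.exp (-s) ^ n)
      = (n : ℝ) * (s ^ 2 * Real.exp (-(n * s))) := by
    intro n
    rw [← Real.exp_nat_mul, mul_neg]
    ring
  have hval : s ^ 2 * (Real.exp (-s) / (1 - Real.exp (-s)) ^ 2)
      = s ^ 2 * (Real.exp s / (Real.exp s - 1) ^ 2) := by
    have hc : 1 < Real.exp s := Real.one_lt_exp_iff.mpr hs
    have hc1 : Real.exp s - 1 ≠ 0 := by nlinarith
    have he : Real.exp s ≠ 0 := (Real.exp_pos s).ne'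
    have hd : 1 - (Real.exp s)⁻¹ ≠ 0 := by
      have : (Real.exp s)⁻¹ < 1 := by
        rw [inv_lt_one_iff₀]; right; exact hc
      nlinarith
    rw [Real.exp_neg]
    field_simp
  rw [← hval]
  simpa only [← hterm] using h

lemma hasSum_h {s : ℝ} (hs : 0 < s) :
    HasSum (fun n : ℕ => s * Real.exp (-((n + 1) * s))) (s * (Real.exp s - 1)⁻¹) := by
  have hc : 1 < Real.exp s := Real.one_lt_exp_iff.mpr hs
  have hc1 : Real.exp s - 1 ≠ 0 := by nlinarith
  have he : Real.exp s ≠ 0 := (Real.exp_pos s).ne'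
  have hr1 : Real.exp (-s) < 1 := Real.exp_lt_one_iff.mpr (neg_lt_zero.mpr hs)
  have h := (hasSum_geometric_of_lt_one (Real.exp_pos (-s)).le hr1).mul_left
    (s * Real.exp (-s))
  have hterm : ∀ n : ℕ, s * Real.exp (-s) * Real.exp (-s) ^ n
      = s * Real.exp (-((n + 1) * s)) := by
    intro n
    rw [← Real.exp_nat_mul, mul_assoc, ← Real.exp_add,
      show -s + (n : ℝ) * -s = -(((n : ℝ) + 1) * s) by ring]
  have hval : s * Real.exp (-s) * (1 - Real.exp (-s))⁻¹ = s * (Real.exp s - 1)⁻¹ := by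
    have hd : 1 - (Real.exp s)⁻¹ ≠ 0 := by
      have : (Real.exp s)⁻¹ < 1 := by
        rw [inv_lt_one_iff₀]; right; exact hc
      nlinarith
    rw [Real.exp_neg]
    field_simp
  rw [← hval]
  simp only [← hterm]
  exact h

lemma measurable_cT : Measurable cT := by
  unfold cT
  fun_prop

lemma final_integral : ∫ s in Ioi (0:ℝ), s * cT s = π ^ 2 / 6 := by
  have hnn : 0 ≤ᵐ[volume.restrict (Ioi (0:ℝ))] fun s => s * cT s :=
    (ae_restrict_iff' measurableSet_Ioi).2 (ae_of_all _ fun s hs =>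
      mul_nonneg (le_of_lt hs) (cT_nonneg (le_of_lt hs)))
  rw [integral_eq_lintegral_of_nonneg_ae hnn
    ((measurable_id.mul measurable_cT).aestronglyMeasurable)]
  have hB : ∫⁻ s in Ioi (0:ℝ), ENNReal.ofReal (s * (Real.exp s - 1)⁻¹)
      = ENNReal.ofReal (π ^ 2 / 6) := by
    have hptw : ∀ s ∈ Ioi (0:ℝ), ENNReal.ofReal (s * (Real.exp s - 1)⁻¹)
        = ∑' n : ℕ, ENNReal.ofReal (s * Real.exp (-(((n:ℝ) + 1) * s))) := by
      intro s hs
      rw [← (hasSum_h hs).tsum_eq, ENNReal.ofReal_tsum_of_nonneg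
        (fun n => mul_nonneg (le_of_lt hs) (Real.exp_pos _).le) (hasSum_h hs).summable]
    rw [setLIntegral_congr_fun measurableSet_Ioi hptw,
      lintegral_tsum (fun n => Measurable.aemeasurable (by fun_prop))]
    have hlem : ∀ n : ℕ, ∫⁻ s in Ioi (0:ℝ),
        ENNReal.ofReal (s * Real.exp (-(((n:ℝ) + 1) * s)))
          = ENNReal.ofReal (1 / ((n:ℝ) + 1) ^ 2) :=
      fun n => lint_mul_exp (by positivity)
    simp_rw [hlem]
    have hz : HasSum (fun n : ℕ => 1 / ((n:ℝ) + 1) ^ 2) (π ^ 2 / 6) := by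
      have := (hasSum_nat_add_iff' (f := fun n : ℕ => (1:ℝ) / (n:ℝ) ^ 2) 1).mpr
        hasSum_zeta_two
      simpa using this
    rw [← ENNReal.ofReal_tsum_of_nonneg (fun n => by positivity) hz.summable, hz.tsum_eq]
  have hA : ∫⁻ s in Ioi (0:ℝ), ENNReal.ofReal (s ^ 2 * (Real.exp s / (Real.exp s - 1) ^ 2))
      = ENNReal.ofReal (π ^ 2 / 3) := by
    have hptw : ∀ s ∈ Ioi (0:ℝ), ENNReal.ofReal (s ^ 2 * (Real.exp s / (Real.exp s - 1) ^ 2))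
        = ∑' n : ℕ, ENNReal.ofReal ((n:ℝ) * (s ^ 2 * Real.exp (-((n:ℝ) * s)))) := by
      intro s hs
      rw [← (hasSum_G hs).tsum_eq, ENNReal.ofReal_tsum_of_nonneg
        (fun n => mul_nonneg (Nat.cast_nonneg n)
          (mul_nonneg (sq_nonneg _) (Real.exp_pos _).le))
        (hasSum_G hs).summable]
    rw [setLIntegral_congr_fun measurableSet_Ioi hptw,
      lintegral_tsum (fun n => Measurable.aemeasurable (by fun_prop))]
    have hlem : ∀ n : ℕ, (∫⁻ s in Ioi (0:ℝ),
        ENNReal.ofReal ((n:ℝ) * (s ^ 2 * Real.exp (-((n:ℝ) * s)))))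
          = ENNReal.ofReal (2 / (n:ℝ) ^ 2) := by
      intro n
      cases n with
      | zero => simp
      | succ k =>
        have hb : (0:ℝ) < (k:ℝ) + 1 := by positivity
        have hmul : ∀ s : ℝ, ENNReal.ofReal (((k:ℝ) + 1) * (s ^ 2 * Real.exp (-(((k:ℝ) + 1) * s))))
            = ENNReal.ofReal ((k:ℝ) + 1)
              * ENNReal.ofReal (s ^ 2 * Real.exp (-(((k:ℝ) + 1) * s))) :=
          fun s => ENNReal.ofReal_mul (by positivity)
        push_cast
        simp_rw [hmul]
        rw [lintegral_const_mul _ (by fun_prop), lint_sq_mul_exp hb,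
          ← ENNReal.ofReal_mul (by positivity)]
        congr 1
        field_simp
    simp_rw [hlem]
    have hz2 : HasSum (fun n : ℕ => 2 / ((n:ℝ)) ^ 2) (π ^ 2 / 3) := by
      have h2 := hasSum_zeta_two.mul_left 2
      have : (2:ℝ) * (π ^ 2 / 6) = π ^ 2 / 3 := by ring
      rw [this] at h2
      refine h2.congr_fun fun n => by ring
    rw [← ENNReal.ofReal_tsum_of_nonneg (fun n => by positivity) hz2.summable, hz2.tsum_eq]
  have hid : ∀ s ∈ Ioi (0:ℝ), ENNReal.ofReal (s * cT s)
      + ENNReal.ofReal (s * (Real.exp s - 1)⁻¹)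
      = ENNReal.ofReal (s ^ 2 * (Real.exp s / (Real.exp s - 1) ^ 2)) := by
    intro s hs
    have hs' : (0:ℝ) < s := hs
    have hc : 1 < Real.exp s := Real.one_lt_exp_iff.mpr hs'
    have hc1 : Real.exp s - 1 ≠ 0 := by nlinarith
    have hinv : 0 ≤ (Real.exp s - 1)⁻¹ := inv_nonneg.2 (by nlinarith)
    rw [← ENNReal.ofReal_add (mul_nonneg hs'.le (cT_nonneg hs'.le))
      (mul_nonneg hs'.le hinv)]
    congr 1
    rw [cT]
    field_simp
    ring
  have hsum : (∫⁻ s in Ioi (0:ℝ), ENNReal.ofReal (s * cT s))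
      + (∫⁻ s in Ioi (0:ℝ), ENNReal.ofReal (s * (Real.exp s - 1)⁻¹))
      = ENNReal.ofReal (π ^ 2 / 3) := by
    rw [← lintegral_add_left (f := fun s => ENNReal.ofReal (s * cT s)) ((measurable_id'.mul measurable_cT).ennreal_ofReal), ← hA]
    exact setLIntegral_congr_fun measurableSet_Ioi hid
  rw [hB] at hsum
  have hL := ENNReal.eq_sub_of_add_eq ENNReal.ofReal_ne_top hsum
  rw [← ENNReal.ofReal_sub _ (by positivity),
    show π ^ 2 / 3 - π ^ 2 / 6 = π ^ 2 / 6 by ring] at hL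
  rw [hL, ENNReal.toReal_ofReal (by positivity)]

end ZetaTwoAux

end ZetaTwoAssignmentAux

open ZetaTwoAux in
theorem zeta_two_assignment_integral
    {Ω : Type*} [MeasureSpace Ω] [IsProbabilityMeasure (ℙ : Measure Ω)]
    (X₁ X₂ : Ω → ℝ) (hmeas₁ : Measurable X₁) (hmeas₂ : Measurable X₂)
    (hindep : IndepFun X₁ X₂ ℙ)
    (hlaw₁ : Measure.map X₁ ℙ
      = volume.withDensity (fun x => ENNReal.ofReal
          (Real.exp (-x) / (1 + Real.exp (-x)) ^ 2)))
    (hlaw₂ : Measure.map X₂ ℙ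
      = volume.withDensity (fun x => ENNReal.ofReal
          (Real.exp (-x) / (1 + Real.exp (-x)) ^ 2))) :
    (∫ x in Set.Ioi (0 : ℝ), x * (ℙ {ω | x < X₁ ω + X₂ ω}).toReal) = π ^ 2 / 6 := by
  have hkey : ∀ s ∈ Set.Ioi (0:ℝ),
      s * (ℙ {ω | s < X₁ ω + X₂ ω}).toReal = s * cT s := by
    intro s hs
    rw [prob_tail X₁ X₂ hmeas₁ hmeas₂ hindep hlaw₁ hlaw₂ hs,
      ENNReal.toReal_ofReal (cT_nonneg (le_of_lt hs))]
  rw [setIntegral_congr_fun measurableSet_Ioi hkey]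
  exact final_integral
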